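/- (Monotonicity) Fix G in the class S and let H in S be a subgraph of G (i.e., V(H) ⊆ V(G) and E(H) ⊆ E(G)). Then for every vertex v of H, the expected number of pops at v under sink popping satisfies E[Q(H, v)] ≥ E[Q(G, v)]. -/

import Mathlib

open MeasureTheory ProbabilityTheory
open scoped ENNReal

namespace SinkPopping

variable {V E : Type} [Fintype V] [Fintype E] [DecidableEq V] [DecidableEq E]

/-- The orientations of the edge `e`: pairs `p = (tail, head)` whose unordered pair of
coordinates is the pair of endpoints of `e`.  The edge is oriented as pointing from
`p.1` (its tail) to `p.2` (its head).  A self-loop has exactly one orientation, any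
other edge has exactly two. -/
abbrev EdgeOrient (ends : E → Sym2 V) (e : E) : Type :=
  {p : V × V // ends e = s(p.1, p.2)}

/-- An orientation of the multigraph on vertices `V` with edges `E` whose endpoint map is
`ends` is a choice of orientation for each edge. -/
def Orientation (ends : E → Sym2 V) : Type :=
  ∀ e, EdgeOrient ends e

/-- A vertex is a sink (for the orientation `o`) if it is the tail of no edge. -/
def IsSink (ends : E → Sym2 V) (o : Orientation ends) (v : V) : Prop :=
  ∀ e, ((o e : V × V)).1 ≠ v

/-- A vertex is a source (for the orientation `o`) if it is the head of no edge. -/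
def IsSource (ends : E → Sym2 V) (o : Orientation ends) (v : V) : Prop :=
  ∀ e, ((o e : V × V)).2 ≠ v

/-- A sink-free orientation. -/
def IsSFO (ends : E → Sym2 V) (o : Orientation ends) : Prop :=
  ∀ v, ¬ IsSink ends o v

instance (ends : E → Sym2 V) (o : Orientation ends) (v : V) : Decidable (IsSink ends o v) :=
  inferInstanceAs (Decidable (∀ e, ((o e : V × V)).1 ≠ v))

instance (ends : E → Sym2 V) (o : Orientation ends) : Decidable (IsSFO ends o) :=
  inferInstanceAs (Decidable (∀ v, ¬ IsSink ends o v))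

/-- Two vertices are adjacent (neighbors) if some edge has them as its endpoints. -/
def Adj (ends : E → Sym2 V) (a b : V) : Prop :=
  ∃ e, ends e = s(a, b)

/-- There is at most one self-loop at each vertex (multiple self-loops play no role
in sink-free orientations). -/
def OneLoopPerVertex (ends : E → Sym2 V) : Prop :=
  ∀ e e' : E, (ends e).IsDiag → ends e = ends e' → e = e'

/-- `vs, es` form a cycle of length `n ≥ 1` in the multigraph: distinct vertices
`v_0, …, v_{n-1}`, distinct edges `e_0, …, e_{n-1}`, with `e_i` joining `v_i` to `v_{i+1}`
(indices mod `n`).  A `1`-cycle is a vertex with a self-loop, a `2`-cycle is a pair of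
parallel edges. -/
def IsCycleIn (ends : E → Sym2 V) (n : ℕ) (vs : ZMod n → V) (es : ZMod n → E) : Prop :=
  0 < n ∧ Function.Injective vs ∧ Function.Injective es ∧
    ∀ i, ends (es i) = s(vs i, vs (i + 1))

/-- Reachability: the reflexive-transitive closure of adjacency.  The connected component
of `v` is the set of vertices reachable from `v`. -/
def Reachable (ends : E → Sym2 V) : V → V → Prop :=
  Relation.ReflTransGen (Adj ends)

/-- The connected component of `v` contains a cycle; for a component (which is connected
by definition) this says exactly that the component is not a tree. -/
def ComponentHasCycle (ends : E → Sym2 V) (v : V) : Prop :=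
  ∃ (n : ℕ) (vs : ZMod n → V) (es : ZMod n → E),
    IsCycleIn ends n vs es ∧ ∀ i, Reachable ends v (vs i)

/-- The class `S` of graphs in which no connected component is a tree, i.e. every
connected component contains a cycle. -/
def InS (ends : E → Sym2 V) : Prop :=
  ∀ v : V, ComponentHasCycle ends v

/-- The class `S₀` of graphs in which every vertex lies in some cycle. -/
def InS₀ (ends : E → Sym2 V) : Prop :=
  ∀ v : V, ∃ (n : ℕ) (vs : ZMod n → V) (es : ZMod n → E),
    IsCycleIn ends n vs es ∧ ∃ i, vs i = v

/-- `G` is (isomorphic to) the `n`-cycle:  vertices `v_0, …, v_{n-1}` and for each `i` an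
edge joining `v_i` to `v_{i+1}` (indices mod `n`).  The `1`-cycle is a vertex with a
self-loop. -/
def IsCycleGraph (ends : E → Sym2 V) : Prop :=
  ∃ (n : ℕ) (_ : 0 < n) (fV : V ≃ ZMod n) (fE : E ≃ ZMod n),
    ∀ e, ends e = s(fV.symm (fE e), fV.symm (fE e + 1))

/-- `G` is (isomorphic to) the `n`-lollipop: a path `v_0, …, v_{n-1}` with the `n-1` edges
`v_i v_{i+1}`, together with a self-loop at the end `v_{n-1}`. -/
def IsLollipopGraph (ends : E → Sym2 V) : Prop :=
  ∃ (n : ℕ) (hn : 0 < n) (fV : V ≃ Fin n) (fE : E ≃ Fin n),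
    ∀ e, ends e = s(fV.symm (fE e),
      fV.symm (if h : ((fE e : ℕ) + 1) < n then ⟨(fE e : ℕ) + 1, h⟩ else fE e))

/-- A stack configuration: an infinite stack of orientations of each edge;
`ω e k` is the `k`-th orientation in the stack under the edge `e`. -/
def PopSpace (ends : E → Sym2 V) : Type :=
  ∀ e, ℕ → EdgeOrient ends e

/-- The orientation showing after the vertices in the list `l` have been popped (in order):
the stack of the edge `e` has been advanced once for every entry of `l` incident to `e`. -/
def orientAfter (ends : E → Sym2 V) (ω : PopSpace ends) (l : List V) : Orientation ends :=
  fun e => ω e (l.countP (fun v => decide (v ∈ ends e)))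

/-- `l` is a legal popping sequence for `ω`: each entry is a sink in the orientation
showing after the previous entries have been popped. -/
def IsLegal (ends : E → Sym2 V) (ω : PopSpace ends) (l : List V) : Prop :=
  ∀ (i : ℕ) (h : i < l.length),
    IsSink ends (orientAfter ends ω (l.take i)) (l.get ⟨i, h⟩)

/-- A finite maximal popping sequence: a legal popping sequence that cannot be extended
(equivalently, one that results in a sink-free orientation). -/
def IsMaximal (ends : E → Sym2 V) (ω : PopSpace ends) (l : List V) : Prop :=
  IsLegal ends ω l ∧ ∀ v, ¬ IsLegal ends ω (l ++ [v])

/-- An infinite legal popping sequence (such a sequence is automatically maximal). -/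
def IsLegalInf (ends : E → Sym2 V) (ω : PopSpace ends) (s : ℕ → V) : Prop :=
  ∀ i, IsSink ends (orientAfter ends ω ((List.range i).map s)) (s i)

/-- A choice rule: whenever there is a sink, `C` selects one. -/
def IsChoiceRule (ends : E → Sym2 V) (C : Orientation ends → V) : Prop :=
  ∀ o : Orientation ends, (∃ v, IsSink ends o v) → IsSink ends o (C o)

/-- Sink popping, run with the choice rule `C` on the stacks `ω`: `runPop ends C ω k` is the
list of vertices popped in the first `k` steps (popping stops once the current orientation
is sink-free). -/
def runPop (ends : E → Sym2 V) (C : Orientation ends → V) (ω : PopSpace ends) : ℕ → List V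
  | 0 => []
  | (k + 1) =>
      let l := runPop ends C ω k
      if IsSFO ends (orientAfter ends ω l) then l
      else l ++ [C (orientAfter ends ω l)]

/-- The number of pops made by sink popping before a sink-free orientation is reached
(`⊤` if popping goes on forever). -/
noncomputable def stopTime (ends : E → Sym2 V) (C : Orientation ends → V)
    (ω : PopSpace ends) : ℕ∞ :=
  sInf ((fun m : ℕ => (m : ℕ∞)) ''
    {m | IsSFO ends (orientAfter ends ω (runPop ends C ω m))})

/-- `Q(G, v)`: the number of times the vertex `v` is popped during sink popping. -/
noncomputable def popCount (ends : E → Sym2 V) (C : Orientation ends → V)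
    (ω : PopSpace ends) (v : V) : ℕ∞ :=
  ⨆ k, ((runPop ends C ω k).count v : ℕ∞)

/-- The initial orientation (the top of all the stacks). -/
def initOrient (ends : E → Sym2 V) (ω : PopSpace ends) : Orientation ends :=
  fun e => ω e 0

instance (ends : E → Sym2 V) (e : E) : Nonempty (EdgeOrient ends e) := by
  obtain ⟨a, b, h⟩ : ∃ a b, ends e = s(a, b) :=
    Sym2.ind (fun a b => ⟨a, b, rfl⟩) (ends e)
  exact ⟨⟨(a, b), h⟩⟩

instance (ends : E → Sym2 V) (e : E) : MeasurableSpace (EdgeOrient ends e) := ⊤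

instance (ends : E → Sym2 V) : MeasurableSpace (PopSpace ends) := by
  unfold PopSpace; infer_instance

/-- The stacks `{X_{e,k} = ω e k : e ∈ E, k ≥ 0}` are independent under `P`, and each
`X_{e,k}` is uniformly distributed over the orientations of the edge `e`. -/
def StacksIID (ends : E → Sym2 V) (P : Measure (PopSpace ends)) : Prop :=
  iIndepFun (fun (p : E × ℕ) (ω : PopSpace ends) => ω p.1 p.2) P
    ∧ ∀ (e : E) (k : ℕ),
        P.map (fun ω : PopSpace ends => ω e k)
          = (PMF.uniformOfFintype (EdgeOrient ends e)).toMeasure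

/-- The number of sink-free orientations of the graph. -/
noncomputable def NumSFO (ends : E → Sym2 V) : ℕ :=
  Nat.card {o : Orientation ends // IsSFO ends o}


/-- `u` is a leaf: a vertex of degree 1, i.e. `u` is incident to exactly one edge,
which is not a self-loop. -/
def IsLeaf (ends : E → Sym2 V) (u : V) : Prop :=
  (∃! e, u ∈ ends e) ∧ ∀ e, u ∈ ends e → ¬ (ends e).IsDiag

/-! ### Auxiliary combinatorial development -/

section Comb

variable {V E : Type} [Fintype V] [Fintype E] [DecidableEq V] [DecidableEq E]
variable (ends : E → Sym2 V)

/-- Advance the stacks of all edges incident to `w` by one. -/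
def shiftPop (ω : PopSpace ends) (w : V) : PopSpace ends :=
  fun e k => ω e (k + if w ∈ ends e then 1 else 0)

/-- An inductive (head-based) characterization of legal popping sequences. -/
def LegalL : PopSpace ends → List V → Prop
  | _, [] => True
  | ω, w :: t => IsSink ends (initOrient ends ω) w ∧ LegalL (shiftPop ends ω w) t

lemma orientAfter_nil (ω : PopSpace ends) : orientAfter ends ω ([] : List V) = initOrient ends ω := rfl

lemma orientAfter_cons (ω : PopSpace ends) (w : V) (t : List V) :
    orientAfter ends ω (w :: t) = orientAfter ends (shiftPop ends ω w) t := by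
  funext e
  simp only [orientAfter, shiftPop, List.countP_cons]
  congr 1
  by_cases h : w ∈ ends e <;> simp [h]

lemma orientAfter_congr (ω : PopSpace ends) {l l' : List V}
    (h : ∀ e, l.countP (fun v => decide (v ∈ ends e)) = l'.countP (fun v => decide (v ∈ ends e))) :
    orientAfter ends ω l = orientAfter ends ω l' := by
  funext e; simp only [orientAfter, h e]

lemma orientAfter_perm (ω : PopSpace ends) {l l' : List V} (h : l.Perm l') :
    orientAfter ends ω l = orientAfter ends ω l' :=
  orientAfter_congr ends ω fun e => h.countP_eq _

lemma mem_ends_of_orient {e : E} : ∀ (q : EdgeOrient ends e), (q : V × V).1 ∈ ends e ∧ (q : V × V).2 ∈ ends e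
  | ⟨(a, b), hp⟩ => by
      constructor
      · show a ∈ ends e; rw [hp]; simp
      · show b ∈ ends e; rw [hp]; simp

lemma tail_mem_ends (o : Orientation ends) (e : E) : ((o e : V × V)).1 ∈ ends e :=
  (mem_ends_of_orient ends (o e)).1

lemma head_mem_ends (o : Orientation ends) (e : E) : ((o e : V × V)).2 ∈ ends e :=
  (mem_ends_of_orient ends (o e)).2

lemma isSink_of_agree {o o' : Orientation ends} {v : V}
    (h : ∀ e, v ∈ ends e → o e = o' e) (hs : IsSink ends o v) : IsSink ends o' v := by
  intro e
  by_cases hv : v ∈ ends e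
  · rw [← h e hv]; exact hs e
  · intro hc; exact hv (hc ▸ tail_mem_ends ends o' e)

/-- Two distinct sinks are not incident to a common edge. -/
lemma sinks_not_adj {o : Orientation ends} {u w : V} (hu : IsSink ends o u)
    (hw : IsSink ends o w) (huw : u ≠ w) {e : E} (he : u ∈ ends e) : w ∉ ends e := by
  intro hwe
  have hends : ends e = s(u, w) := Sym2.eq_of_ne_mem huw he hwe (Sym2.mem_mk_left u w)
    (Sym2.mem_mk_right u w)
  have h1 := tail_mem_ends ends o e
  have h2 : ((o e : V × V)).1 ∈ s(u, w) := hends ▸ h1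
  rcases Sym2.mem_iff.mp h2 with h1 | h1
  · exact hu e h1
  · exact hw e h1

lemma shiftPop_comm (ω : PopSpace ends) (a b : V) :
    shiftPop ends (shiftPop ends ω a) b = shiftPop ends (shiftPop ends ω b) a := by
  funext e k
  simp only [shiftPop]
  congr 1
  ring

lemma initOrient_shiftPop_eq {ω : PopSpace ends} {w : V} {e : E} (h : w ∉ ends e) :
    initOrient ends (shiftPop ends ω w) e = initOrient ends ω e := by
  simp [initOrient, shiftPop, h]

lemma sink_init_shiftPop {ω : PopSpace ends} {u w : V}
    (hu : IsSink ends (initOrient ends ω) u) (hw : IsSink ends (initOrient ends ω) w)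
    (huw : u ≠ w) : IsSink ends (initOrient ends (shiftPop ends ω w)) u := by
  refine isSink_of_agree ends (fun e he => ?_) hu
  exact (initOrient_shiftPop_eq ends (sinks_not_adj ends hu hw huw he)).symm

lemma legalL_cons {ω : PopSpace ends} {w : V} {t : List V} :
    LegalL ends ω (w :: t) ↔
      IsSink ends (initOrient ends ω) w ∧ LegalL ends (shiftPop ends ω w) t := Iff.rfl

/-- A sink can be popped first before any legal sequence avoiding it. -/
lemma exchange_cons {u : V} : ∀ (m : List V) (ω : PopSpace ends), LegalL ends ω m →
    IsSink ends (initOrient ends ω) u → u ∉ m → LegalL ends ω (u :: m)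
  | [], ω, _, hu, _ => ⟨hu, trivial⟩
  | w :: t, ω, hm, hu, hmem => by
    have huw : u ≠ w := fun h => hmem (h ▸ List.mem_cons_self)
    obtain ⟨hw, ht⟩ := hm
    have hut : u ∉ t := fun h => hmem (List.mem_cons_of_mem _ h)
    have hu' : IsSink ends (initOrient ends (shiftPop ends ω w)) u :=
      sink_init_shiftPop ends hu hw huw
    have := exchange_cons t (shiftPop ends ω w) ht hu' hut
    refine ⟨hu, sink_init_shiftPop ends hw hu huw.symm, ?_⟩
    rw [shiftPop_comm]
    exact this.2

/-- A sink that is never popped remains a sink. -/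
lemma persist_sink {u : V} : ∀ (m : List V) (ω : PopSpace ends), LegalL ends ω m →
    IsSink ends (initOrient ends ω) u → u ∉ m → IsSink ends (orientAfter ends ω m) u
  | [], ω, _, hu, _ => hu
  | w :: t, ω, hm, hu, hmem => by
    have huw : u ≠ w := fun h => hmem (h ▸ List.mem_cons_self)
    obtain ⟨hw, ht⟩ := hm
    rw [orientAfter_cons]
    exact persist_sink t (shiftPop ends ω w) ht (sink_init_shiftPop ends hu hw huw)
      (fun h => hmem (List.mem_cons_of_mem _ h))

/-- A first-popped sink can be moved past a legal sequence avoiding it. -/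
lemma exchange_out {u : V} : ∀ (m₁ : List V) (m₂ : List V) (ω : PopSpace ends),
    IsSink ends (initOrient ends ω) u → u ∉ m₁ → LegalL ends ω (m₁ ++ u :: m₂) →
    LegalL ends (shiftPop ends ω u) (m₁ ++ m₂)
  | [], m₂, ω, _, _, hm => hm.2
  | w :: t, m₂, ω, hu, hmem, hm => by
    have huw : u ≠ w := fun h => hmem (h ▸ List.mem_cons_self)
    obtain ⟨hw, ht⟩ := hm
    have hu' : IsSink ends (initOrient ends (shiftPop ends ω w)) u :=
      sink_init_shiftPop ends hu hw huw
    have := exchange_out t m₂ (shiftPop ends ω w) hu' (fun h => hmem (List.mem_cons_of_mem _ h)) ht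
    refine ⟨sink_init_shiftPop ends hw hu huw.symm, ?_⟩
    rw [shiftPop_comm]
    exact this

lemma first_occ_split {u : V} : ∀ {m : List V}, u ∈ m →
    ∃ m₁ m₂, m = m₁ ++ u :: m₂ ∧ u ∉ m₁
  | w :: t, hm => by
    by_cases h : u = w
    · exact ⟨[], t, by simp [h], by simp⟩
    · have : u ∈ t := by
        rcases List.mem_cons.mp hm with h' | h'
        · exact absurd h' h
        · exact h'
      obtain ⟨m₁, m₂, hspl, hnot⟩ := first_occ_split this
      exact ⟨w :: m₁, m₂, by simp [hspl], by simp [hnot, Ne.symm, h]⟩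

/-- The diamond lemma: counts in a legal sequence are dominated by counts in a
legal sequence ending in a sink-free orientation. -/
lemma diamond : ∀ (l : List V) (ω : PopSpace ends) (m : List V), LegalL ends ω l →
    LegalL ends ω m → IsSFO ends (orientAfter ends ω m) → ∀ v, l.count v ≤ m.count v
  | [], _, _, _, _, _, _ => by simp
  | u :: l', ω, m, hl, hm, hsfo, v => by
    obtain ⟨hu, hl'⟩ := hl
    have hum : u ∈ m := by
      by_contra hnot
      exact hsfo u (persist_sink ends m ω hm hu hnot)
    obtain ⟨m₁, m₂, rfl, hm₁⟩ := first_occ_split hum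
    have hperm : (u :: (m₁ ++ m₂)).Perm (m₁ ++ u :: m₂) := List.perm_middle.symm
    have hm' : LegalL ends (shiftPop ends ω u) (m₁ ++ m₂) := exchange_out ends m₁ m₂ ω hu hm₁ hm
    have hsfo' : IsSFO ends (orientAfter ends (shiftPop ends ω u) (m₁ ++ m₂)) := by
      rw [← orientAfter_cons]
      rw [orientAfter_perm ends ω hperm]
      exact hsfo
    have IH := diamond l' (shiftPop ends ω u) (m₁ ++ m₂) hl' hm' hsfo' v
    have hcount : (m₁ ++ u :: m₂).count v = (u :: (m₁ ++ m₂)).count v :=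
      (hperm.count_eq v).symm
    rw [hcount, List.count_cons, List.count_cons]
    omega

end Comb


section Run

variable {V E : Type} [Fintype V] [Fintype E] [DecidableEq V] [DecidableEq E]
variable (ends : E → Sym2 V) (C : Orientation ends → V)

lemma exists_sink_of_not_sfo {o : Orientation ends} (h : ¬ IsSFO ends o) :
    ∃ v, IsSink ends o v := by
  by_contra hc
  push_neg at hc
  exact h hc

lemma legal_append : ∀ (l : List V) (ω : PopSpace ends), LegalL ends ω l →
    ∀ {x : V}, IsSink ends (orientAfter ends ω l) x → LegalL ends ω (l ++ [x])
  | [], ω, _, x, hx => ⟨hx, trivial⟩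
  | w :: t, ω, hl, x, hx => by
    refine ⟨hl.1, ?_⟩
    exact legal_append t (shiftPop ends ω w) hl.2 ((orientAfter_cons ends ω w t) ▸ hx)

lemma legal_runPop (hC : IsChoiceRule ends C) (ω : PopSpace ends) :
    ∀ k, LegalL ends ω (runPop ends C ω k)
  | 0 => trivial
  | (k + 1) => by
    rw [runPop]
    by_cases h : IsSFO ends (orientAfter ends ω (runPop ends C ω k))
    · simpa [h] using legal_runPop hC ω k
    · simp only [h, if_false]
      exact legal_append ends _ ω (legal_runPop hC ω k)
        (hC _ (exists_sink_of_not_sfo ends h))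

lemma runPop_succ_alive {ω : PopSpace ends} {k : ℕ}
    (h : ¬ IsSFO ends (orientAfter ends ω (runPop ends C ω k))) :
    runPop ends C ω (k + 1) = runPop ends C ω k ++ [C (orientAfter ends ω (runPop ends C ω k))] := by
  rw [runPop]; simp [h]

lemma runPop_prefix {ω : PopSpace ends} : ∀ {k k' : ℕ}, k ≤ k' →
    (runPop ends C ω k) <+: (runPop ends C ω k') := by
  intro k k' h
  induction k' with
  | zero => simp_all
  | succ n IH =>
    rcases Nat.lt_or_ge k (n + 1) with h' | h'
    · have hpre := IH (by omega)
      rw [runPop]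
      by_cases hs : IsSFO ends (orientAfter ends ω (runPop ends C ω n))
      · simpa [hs] using hpre
      · simp only [hs, if_false]
        exact hpre.trans (List.prefix_append _ _)
    · have : k = n + 1 := by omega
      subst this
      exact List.prefix_refl _

lemma runPop_freeze {ω : PopSpace ends} {m : ℕ}
    (h : IsSFO ends (orientAfter ends ω (runPop ends C ω m))) :
    ∀ j, runPop ends C ω (m + j) = runPop ends C ω m
  | 0 => rfl
  | (j + 1) => by
    have IH := runPop_freeze h j
    show runPop ends C ω ((m + j) + 1) = _
    rw [runPop]
    simp [IH, h]

lemma alive_mono {ω : PopSpace ends} {m k : ℕ} (hmk : m ≤ k)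
    (h : ¬ IsSFO ends (orientAfter ends ω (runPop ends C ω k))) :
    ¬ IsSFO ends (orientAfter ends ω (runPop ends C ω m)) := by
  intro hs
  obtain ⟨j, rfl⟩ := Nat.exists_eq_add_of_le hmk
  rw [runPop_freeze ends C hs j] at h
  exact h hs

lemma runPop_length {ω : PopSpace ends} {m : ℕ}
    (h : ¬ IsSFO ends (orientAfter ends ω (runPop ends C ω m))) :
    ∀ k, k ≤ m + 1 → (runPop ends C ω k).length = k := by
  intro k hk
  induction k with
  | zero => rfl
  | succ j IH =>
    have hj : ¬ IsSFO ends (orientAfter ends ω (runPop ends C ω j)) :=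
      alive_mono ends C (by omega) h
    rw [runPop_succ_alive ends C hj]
    simp [IH (by omega)]

lemma countP_mem_le_two_of_nodup {l : List V} (hn : l.Nodup) (z : Sym2 V) :
    l.countP (fun v => decide (v ∈ z)) ≤ 2 := by
  induction z using Sym2.ind with
  | _ a b =>
    rw [List.countP_eq_length_filter]
    set f := l.filter (fun v => decide (v ∈ s(a,b))) with hf
    have hnf : f.Nodup := hn.filter _
    have hsub : f.toFinset ⊆ {a, b} := by
      intro x hx
      rw [List.mem_toFinset] at hx
      have hmem := List.of_mem_filter hx
      have hx2 : x ∈ s(a,b) := of_decide_eq_true hmem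
      rw [Sym2.mem_iff] at hx2
      rcases hx2 with h | h <;> simp [h]
    have h1 : f.toFinset.card = f.length := List.toFinset_card_of_nodup hnf
    have h2 := Finset.card_le_card hsub
    have h3 : ({a, b} : Finset V).card ≤ 2 :=
      (Finset.card_insert_le a {b}).trans (by simp)
    omega

/-- The key "window" lemma: if the next two stack entries under each edge all show a fixed
sink-free orientation `σ`, then the popping run terminates within `card V` further steps. -/
lemma window (hC : IsChoiceRule ends C) {σ : Orientation ends} (hσ : IsSFO ends σ)
    (ω : PopSpace ends) (n : ℕ)
    (hE : ∀ e, ω e ((runPop ends C ω n).countP (fun v => decide (v ∈ ends e)) + 1) = σ e ∧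
               ω e ((runPop ends C ω n).countP (fun v => decide (v ∈ ends e)) + 2) = σ e) :
    ∃ s ≤ Fintype.card V, IsSFO ends (orientAfter ends ω (runPop ends C ω (n + s))) := by
  set N := Fintype.card V with hN
  by_contra hcon
  push_neg at hcon
  have halive : ∀ s, s ≤ N → ¬ IsSFO ends (orientAfter ends ω (runPop ends C ω (n + s))) :=
    fun s hs => hcon s hs
  have haliveN := halive N le_rfl
  have hlen : ∀ k, k ≤ n + N + 1 → (runPop ends C ω k).length = k :=
    runPop_length ends C haliveN
  -- the suffix after time `n`
  have hsuffix : ∀ s, s ≤ N + 1 → ∃ suf : List V,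
      runPop ends C ω (n + s) = runPop ends C ω n ++ suf ∧ suf.length = s := by
    intro s hs
    obtain ⟨suf, hsuf⟩ := runPop_prefix ends C (Nat.le_add_right n s)
    refine ⟨suf, hsuf.symm, ?_⟩
    have h1 : (runPop ends C ω (n + s)).length = n + s := hlen _ (by omega)
    have h2 : (runPop ends C ω n).length = n := hlen _ (by omega)
    have := congrArg List.length hsuf
    simp only [List.length_append, h1, h2] at this
    omega
  -- nodup invariant for the suffix
  have hnodup : ∀ s, s ≤ N + 1 → ∀ suf : List V,
      runPop ends C ω (n + s) = runPop ends C ω n ++ suf → suf.Nodup := by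
    intro s
    induction s with
    | zero =>
      intro _ suf hsuf
      have h2 : (runPop ends C ω n).length = n := hlen _ (by omega)
      have := congrArg List.length hsuf
      simp only [List.length_append, h2, Nat.add_zero] at this
      have : suf.length = 0 := by omega
      simp [List.length_eq_zero_iff.mp this]
    | succ s IH =>
      intro hs suf1 hsuf1
      obtain ⟨suf, hsuf, hsuflen⟩ := hsuffix s (by omega)
      have hnd : suf.Nodup := IH (by omega) suf hsuf
      have hal : ¬ IsSFO ends (orientAfter ends ω (runPop ends C ω (n + s))) :=
        alive_mono ends C (by omega) haliveN
      set L := runPop ends C ω (n + s) with hL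
      set x := C (orientAfter ends ω L) with hx
      have hstep : runPop ends C ω (n + (s+1)) = L ++ [x] := by
        show runPop ends C ω ((n + s) + 1) = L ++ [x]
        exact runPop_succ_alive ends C hal
      have hsink : IsSink ends (orientAfter ends ω L) x := hC _ (exists_sink_of_not_sfo ends hal)
      -- key claim: x ∉ suf
      have hxnot : x ∉ suf := by
        intro hmem
        -- every edge at x currently shows σ
        have hedge : ∀ e, x ∈ ends e → orientAfter ends ω L e = σ e := by
          intro e he
          have hcount : L.countP (fun v => decide (v ∈ ends e)) =
              (runPop ends C ω n).countP (fun v => decide (v ∈ ends e)) +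
                suf.countP (fun v => decide (v ∈ ends e)) := by
            rw [hsuf, List.countP_append]
          have hpos : 0 < suf.countP (fun v => decide (v ∈ ends e)) :=
            List.countP_pos_iff.mpr ⟨x, hmem, by simpa using he⟩
          have hle : suf.countP (fun v => decide (v ∈ ends e)) ≤ 2 :=
            countP_mem_le_two_of_nodup hnd (ends e)
          have h12 : L.countP (fun v => decide (v ∈ ends e)) =
              (runPop ends C ω n).countP (fun v => decide (v ∈ ends e)) + 1 ∨
              L.countP (fun v => decide (v ∈ ends e)) =
              (runPop ends C ω n).countP (fun v => decide (v ∈ ends e)) + 2 := by omega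
          rcases h12 with h12 | h12
          · show ω e _ = σ e
            rw [h12]
            exact (hE e).1
          · show ω e _ = σ e
            rw [h12]
            exact (hE e).2
        -- σ has an out-edge at x
        obtain ⟨e₀, he₀⟩ : ∃ e₀, ((σ e₀ : V × V)).1 = x := by
          have := hσ x
          unfold IsSink at this
          push_neg at this
          exact this
        have hxe : x ∈ ends e₀ := he₀ ▸ tail_mem_ends ends σ e₀
        have := hsink e₀
        rw [hedge e₀ hxe, he₀] at this
        exact this rfl
      have : suf1 = suf ++ [x] := by
        have h1 : runPop ends C ω n ++ suf1 = runPop ends C ω n ++ (suf ++ [x]) := by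
          rw [← hsuf1, hstep, hsuf, List.append_assoc]
        exact List.append_cancel_left h1
      rw [this]
      simp [List.nodup_append, hnd, hxnot]
      exact fun a ha h => hxnot (h ▸ ha)
  -- contradiction: a nodup list of length N + 1 in V
  obtain ⟨suf, hsuf, hsuflen⟩ := hsuffix (N + 1) le_rfl
  have hnd := hnodup (N + 1) le_rfl suf hsuf
  have := hnd.length_le_card
  rw [hsuflen] at this
  omega

end Run



section Transfer

variable {V E V' E' : Type} [Fintype V] [Fintype E] [DecidableEq V] [DecidableEq E]
  [Fintype V'] [Fintype E'] [DecidableEq V'] [DecidableEq E']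

/-- Noncomputable retraction of the vertex injection. -/
noncomputable def rV [Nonempty V'] (ιV : V' → V) : V → V' := Function.invFun ιV

variable [Nonempty V']

lemma rV_iota {ιV : V' → V} (hιV : Function.Injective ιV) (u : V') : rV ιV (ιV u) = u :=
  Function.leftInverse_invFun hιV u

lemma iota_rV {ιV : V' → V} (hιV : Function.Injective ιV) {w : V} (h : ∃ u, ιV u = w) :
    ιV (rV ιV w) = w := by
  obtain ⟨u, rfl⟩ := h
  rw [rV_iota hιV]

variable (ends : E → Sym2 V) (ends' : E' → Sym2 V') (ιV : V' → V) (ιE : E' → E)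
variable (hιV : Function.Injective ιV)
variable (hends : ∀ e, ends (ιE e) = Sym2.map ιV (ends' e))

section

include hends

lemma mem_ends_iota {e' : E'} {w : V} :
    w ∈ ends (ιE e') ↔ ∃ u ∈ ends' e', ιV u = w := by
  rw [hends e']
  exact Sym2.mem_map

include hιV

lemma mem_ends_iota' {e' : E'} {u : V'} :
    ιV u ∈ ends (ιE e') ↔ u ∈ ends' e' := by
  rw [mem_ends_iota ends ends' ιV ιE hends]
  constructor
  · rintro ⟨u₀, hu₀, h⟩
    rwa [← hιV h]
  · intro h
    exact ⟨u, h, rfl⟩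

end

/-- Pull back an orientation of the image edge to an orientation of the original edge. -/
noncomputable def pullO (e' : E') (q : EdgeOrient ends (ιE e')) : EdgeOrient ends' e' := by
  refine ⟨(rV ιV (q : V × V).1, rV ιV (q : V × V).2), ?_⟩
  obtain ⟨x, y, hxy⟩ : ∃ x y, ends' e' = s(x, y) :=
    Sym2.ind (fun x y => ⟨x, y, rfl⟩) (ends' e')
  have h2 : Sym2.map ιV (ends' e') = s((q : V × V).1, (q : V × V).2) := by
    rw [← hends]; exact q.2
  rw [hxy, Sym2.map_pair_eq] at h2
  rw [hxy]
  rcases Sym2.eq_iff.mp h2 with ⟨h3, h4⟩ | ⟨h3, h4⟩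
  · rw [← h3, ← h4, rV_iota hιV, rV_iota hιV]
  · rw [← h3, ← h4, rV_iota hιV, rV_iota hιV]
    exact Sym2.eq_swap

/-- Push forward an orientation of an edge of the subgraph. -/
def pushO (e' : E') (q : EdgeOrient ends' e') : EdgeOrient ends (ιE e') :=
  ⟨(ιV (q : V' × V').1, ιV (q : V' × V').2), by
    calc ends (ιE e') = Sym2.map ιV (ends' e') := hends e'
    _ = Sym2.map ιV s((q : V' × V').1, (q : V' × V').2) := congrArg _ q.2
    _ = s(ιV (q : V' × V').1, ιV (q : V' × V').2) := Sym2.map_pair_eq _ _ _⟩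

include hιV hends in
lemma pullO_pushO (e' : E') (q : EdgeOrient ends' e') :
    pullO ends ends' ιV ιE hιV hends e' (pushO ends ends' ιV ιE hends e' q) = q := by
  apply Subtype.ext
  show (rV ιV (ιV _), rV ιV (ιV _)) = _
  rw [rV_iota hιV, rV_iota hιV]

include hιV hends in
lemma pushO_pullO (e' : E') (q : EdgeOrient ends (ιE e')) :
    pushO ends ends' ιV ιE hends e' (pullO ends ends' ιV ιE hιV hends e' q) = q := by
  apply Subtype.ext
  show (ιV (rV ιV (q : V × V).1), ιV (rV ιV (q : V × V).2)) = (q : V × V)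
  have h1 : (q : V × V).1 ∈ ends (ιE e') := (mem_ends_of_orient ends q).1
  have h2 : (q : V × V).2 ∈ ends (ιE e') := (mem_ends_of_orient ends q).2
  rw [mem_ends_iota ends ends' ιV ιE hends] at h1 h2
  obtain ⟨u₁, _, hu₁⟩ := h1
  obtain ⟨u₂, _, hu₂⟩ := h2
  rw [iota_rV hιV ⟨u₁, hu₁⟩, iota_rV hιV ⟨u₂, hu₂⟩]

/-- The pull-back equivalence on edge orientations. -/
noncomputable def pullEquiv (e' : E') : EdgeOrient ends (ιE e') ≃ EdgeOrient ends' e' where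
  toFun := pullO ends ends' ιV ιE hιV hends e'
  invFun := pushO ends ends' ιV ιE hends e'
  left_inv := pushO_pullO ends ends' ιV ιE hιV hends e'
  right_inv := pullO_pushO ends ends' ιV ιE hιV hends e'

/-- Pull back an orientation of the large graph. -/
noncomputable def pullOrient (o : Orientation ends) : Orientation ends' :=
  fun e' => pullO ends ends' ιV ιE hιV hends e' (o (ιE e'))

/-- Pull back a stack configuration. -/
noncomputable def pullSpace (ω : PopSpace ends) : PopSpace ends' :=
  fun e' k => pullO ends ends' ιV ιE hιV hends e' (ω (ιE e') k)

include hιV hends in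
lemma sink_pull {o : Orientation ends} {u : V'} (h : IsSink ends o (ιV u)) :
    IsSink ends' (pullOrient ends ends' ιV ιE hιV hends o) u := by
  intro e'
  show rV ιV ((o (ιE e') : V × V)).1 ≠ u
  intro hc
  have h1 : ((o (ιE e') : V × V)).1 ∈ ends (ιE e') := tail_mem_ends ends o (ιE e')
  rw [mem_ends_iota ends ends' ιV ιE hends] at h1
  obtain ⟨u₀, hu₀mem, hu₀⟩ := h1
  rw [← hu₀, rV_iota hιV] at hc
  subst hc
  exact h (ιE e') hu₀.symm

/-- Transfer of a popping sequence: keep the pops at subgraph vertices. -/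
noncomputable def trList (ιV : V' → V) (L : List V) : List V' :=
  (L.filter (fun w => decide (∃ u, ιV u = w))).map (rV ιV)

include hιV in
lemma trList_cons_mem (u : V') (t : List V) :
    trList ιV (ιV u :: t) = u :: trList ιV t := by
  unfold trList
  rw [List.filter_cons_of_pos (by simp only [decide_eq_true_eq]; exact ⟨u, rfl⟩)]
  rw [List.map_cons, rV_iota hιV]

lemma trList_cons_not_mem {w : V} (h : ¬ ∃ u, ιV u = w) (t : List V) :
    trList ιV (w :: t) = trList ιV t := by
  unfold trList
  rw [List.filter_cons_of_neg (by simpa using h)]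

include hιV in
lemma count_trList (u : V') : ∀ L : List V, (trList ιV L).count u = L.count (ιV u)
  | [] => rfl
  | w :: t => by
    by_cases h : ∃ u', ιV u' = w
    · obtain ⟨u', rfl⟩ := h
      rw [trList_cons_mem ιV hιV, List.count_cons, List.count_cons,
        count_trList u t]
      congr 1
      by_cases h' : u = u'
      · simp [h']
      · have h2 : ιV u' ≠ ιV u := fun hc => h' (hιV hc.symm)
        have h3 : u' ≠ u := fun hc => h' hc.symm
        simp [h2, h3]
    · rw [trList_cons_not_mem ιV h, List.count_cons, count_trList u t]
      have h2 : ιV u ≠ w := fun hc => h ⟨u, hc⟩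
      simp [h2.symm]

include hιV hends in
lemma countP_trList (e' : E') : ∀ L : List V,
    (trList ιV L).countP (fun x => decide (x ∈ ends' e')) =
      L.countP (fun w => decide (w ∈ ends (ιE e')))
  | [] => rfl
  | w :: t => by
    by_cases h : ∃ u', ιV u' = w
    · obtain ⟨u', rfl⟩ := h
      rw [trList_cons_mem ιV hιV, List.countP_cons, List.countP_cons,
        countP_trList e' t]
      congr 1
      have hiff : ιV u' ∈ ends (ιE e') ↔ u' ∈ ends' e' :=
        mem_ends_iota' ends ends' ιV ιE hιV hends
      by_cases h' : u' ∈ ends' e'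
      · simp [hiff, h']
      · simp [hiff, h']
    · rw [trList_cons_not_mem ιV h, List.countP_cons, countP_trList e' t]
      have hnot : w ∉ ends (ιE e') := by
        intro hc
        rw [mem_ends_iota ends ends' ιV ιE hends] at hc
        obtain ⟨u₀, _, hu₀⟩ := hc
        exact h ⟨u₀, hu₀⟩
      simp [hnot]

include hιV hends in
lemma pullSpace_shift (ω : PopSpace ends) (u : V') :
    pullSpace ends ends' ιV ιE hιV hends (shiftPop ends ω (ιV u)) =
      shiftPop ends' (pullSpace ends ends' ιV ιE hιV hends ω) u := by
  funext e' k
  unfold pullSpace shiftPop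
  congr 2
  have hiff : ιV u ∈ ends (ιE e') ↔ u ∈ ends' e' :=
    mem_ends_iota' ends ends' ιV ιE hιV hends
  by_cases h : u ∈ ends' e' <;> simp [h, hiff]

include hιV hends in
lemma pullSpace_shift_out (ω : PopSpace ends) {w : V} (h : ¬ ∃ u, ιV u = w) :
    pullSpace ends ends' ιV ιE hιV hends (shiftPop ends ω w) =
      pullSpace ends ends' ιV ιE hιV hends ω := by
  funext e' k
  unfold pullSpace shiftPop
  congr 2
  have hnot : w ∉ ends (ιE e') := by
    intro hc
    rw [mem_ends_iota ends ends' ιV ιE hends] at hc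
    obtain ⟨u₀, _, hu₀⟩ := hc
    exact h ⟨u₀, hu₀⟩
  simp [hnot]

lemma initOrient_pullSpace (ω : PopSpace ends) :
    initOrient ends' (pullSpace ends ends' ιV ιE hιV hends ω) =
      pullOrient ends ends' ιV ιE hιV hends (initOrient ends ω) := rfl

include hιV hends in
lemma legal_trList : ∀ (L : List V) (ω : PopSpace ends), LegalL ends ω L →
    LegalL ends' (pullSpace ends ends' ιV ιE hιV hends ω) (trList ιV L)
  | [], _, _ => trivial
  | w :: t, ω, hL => by
    obtain ⟨hw, ht⟩ := hL
    by_cases h : ∃ u, ιV u = w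
    · obtain ⟨u, rfl⟩ := h
      rw [trList_cons_mem ιV hιV]
      refine ⟨?_, ?_⟩
      · rw [initOrient_pullSpace]
        exact sink_pull ends ends' ιV ιE hιV hends hw
      · have IH := legal_trList t (shiftPop ends ω (ιV u)) ht
        rwa [pullSpace_shift ends ends' ιV ιE hιV hends] at IH
    · rw [trList_cons_not_mem ιV h]
      have IH := legal_trList t (shiftPop ends ω w) ht
      rwa [pullSpace_shift_out ends ends' ιV ιE hιV hends ω h] at IH

include hιV hends in
lemma orientAfter_pullSpace (ω : PopSpace ends) (L : List V) :
    orientAfter ends' (pullSpace ends ends' ιV ιE hιV hends ω) (trList ιV L) =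
      pullOrient ends ends' ιV ιE hιV hends (orientAfter ends ω L) := by
  funext e'
  show pullO ends ends' ιV ιE hιV hends e' (ω (ιE e') _) = pullO ends ends' ιV ιE hιV hends e' (ω (ιE e') _)
  rw [countP_trList ends ends' ιV ιE hιV hends e' L]

end Transfer


section SFOExist

variable {V E : Type} [Fintype V] [Fintype E] [DecidableEq V] [DecidableEq E]
variable (ends : E → Sym2 V)

/-- `v` lies on a cycle. -/
def OnCycle (v : V) : Prop := ∃ (n : ℕ) (vs : ZMod n → V) (es : ZMod n → E),
  IsCycleIn ends n vs es ∧ ∃ i, vs i = v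

/-- `v` can reach a cycle vertex in `m` steps. -/
def reachC : ℕ → V → Prop
  | 0, v => OnCycle ends v
  | (m + 1), v => ∃ e u, ends e = s(v, u) ∧ reachC m u

lemma exists_reachC (hS : InS ends) (v : V) : ∃ m, reachC ends m v := by
  obtain ⟨n, vs, es, hcyc, hreach⟩ := hS v
  have h0 : OnCycle ends (vs 0) := ⟨n, vs, es, hcyc, 0, rfl⟩
  have hr : Reachable ends v (vs 0) := hreach 0
  clear hreach
  induction hr using Relation.ReflTransGen.head_induction_on with
  | refl => exact ⟨0, h0⟩
  | head hadj _ ih =>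
      obtain ⟨m, hm⟩ := ih
      obtain ⟨e, he⟩ := hadj
      exact ⟨m + 1, e, _, he, hm⟩

lemma exists_sfo (hS : InS ends) : ∃ σ : Orientation ends, IsSFO ends σ := by
  classical
  have hreach : ∀ v, ∃ m, reachC ends m v := exists_reachC ends hS
  set d : V → ℕ := fun v => Nat.find (hreach v) with hd
  set Pd : E → Prop := fun e => ∃ p : V × V, ends e = s(p.1, p.2) ∧ ¬ OnCycle ends p.1 ∧ d p.2 < d p.1
    with hPd
  have hPd_choice : ∀ e (h : Pd e), ends e = s(h.choose.1, h.choose.2) := fun e h => h.choose_spec.1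
  set o₀ : Orientation ends := fun e =>
    if h : Pd e then ⟨h.choose, hPd_choice e h⟩ else Classical.arbitrary _ with ho₀
  -- Fact A : a vertex not on a cycle has a designated `Pd` out-edge in `o₀`.
  have factA : ∀ v, ¬ OnCycle ends v → ∃ e, Pd e ∧ ((o₀ e : V × V)).1 = v := by
    intro v hnc
    have hspec : reachC ends (d v) v := Nat.find_spec (hreach v)
    have hne : d v ≠ 0 := by
      intro h0
      rw [h0] at hspec
      exact hnc hspec
    obtain ⟨m, hm⟩ : ∃ m, d v = m + 1 := ⟨d v - 1, by omega⟩
    rw [hm] at hspec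
    obtain ⟨e, u, he, hu⟩ := hspec
    have hdu : d u < d v := by
      have h2 : d u ≤ m := Nat.find_min' (hreach u) hu
      omega
    have hPe : Pd e := ⟨(v, u), he, hnc, hdu⟩
    refine ⟨e, hPe, ?_⟩
    have heq : (o₀ e : V × V) = hPe.choose := by
      rw [ho₀]
      simp only [dif_pos hPe]
    have hch := hPe.choose_spec
    obtain ⟨hch1, hch2, hch3⟩ := hch
    rw [heq]
    have hpair : s(hPe.choose.1, hPe.choose.2) = s(v, u) := by rw [← hch1, he]
    rcases Sym2.eq_iff.mp hpair with ⟨h1, h2⟩ | ⟨h1, h2⟩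
    · exact h1
    · exfalso
      rw [h1, h2] at hch3
      omega
  -- Main induction on the number of sinks.
  have main : ∀ (k : ℕ) (o : Orientation ends), (∀ e, Pd e → o e = o₀ e) →
      (Finset.univ.filter (fun w => IsSink ends o w)).card ≤ k → ∃ σ, IsSFO ends σ := by
    intro k
    induction k with
    | zero =>
      intro o _ hcard
      refine ⟨o, fun w hw => ?_⟩
      have hmem : w ∈ Finset.univ.filter (fun w => IsSink ends o w) := by
        simp [hw]
      have hempty : (Finset.univ.filter (fun w => IsSink ends o w)).card = 0 := Nat.le_zero.mp hcard
      rw [Finset.card_eq_zero] at hempty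
      rw [hempty] at hmem
      exact absurd hmem (Finset.notMem_empty w)
    | succ k IH =>
      intro o hagree hcard
      by_cases hsfo : IsSFO ends o
      · exact ⟨o, hsfo⟩
      obtain ⟨v, hv⟩ := exists_sink_of_not_sfo ends hsfo
      have hvc : OnCycle ends v := by
        by_contra hnc
        obtain ⟨e, hPe, he1⟩ := factA v hnc
        have : o e = o₀ e := hagree e hPe
        exact hv e (by rw [this]; exact he1)
      obtain ⟨n, vs, es, hcyc, i, hvi⟩ := hvc
      obtain ⟨hn, hvinj, heinj, hends⟩ := hcyc
      set o' : Orientation ends := fun e =>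
        if h : ∃ j, es j = e then ⟨(vs h.choose, vs (h.choose + 1)),
            (congrArg ends h.choose_spec.symm).trans (hends h.choose)⟩
          else o e with ho'
      have ho'es : ∀ j, (o' (es j) : V × V) = (vs j, vs (j + 1)) := by
        intro j
        have hex : ∃ j', es j' = es j := ⟨j, rfl⟩
        have hj : hex.choose = j := heinj hex.choose_spec
        rw [ho']
        simp only [dif_pos hex]
        show (vs hex.choose, vs (hex.choose + 1)) = (vs j, vs (j + 1))
        rw [hj]
      have hout : ∀ w, (∃ e, ((o e : V × V)).1 = w) → ∃ e, ((o' e : V × V)).1 = w := by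
        rintro w ⟨e, he⟩
        by_cases h : ∃ j, es j = e
        · obtain ⟨j, rfl⟩ := h
          have hw : w ∈ ends (es j) := he ▸ tail_mem_ends ends o (es j)
          rw [hends j] at hw
          rcases Sym2.mem_iff.mp hw with rfl | rfl
          · exact ⟨es j, by rw [ho'es j]⟩
          · exact ⟨es (j + 1), by rw [ho'es (j + 1)]⟩
        · refine ⟨e, ?_⟩
          rw [ho']
          simp only [dif_neg h]
          exact he
      have hcycle_out : ∀ j, ((o' (es j) : V × V)).1 = vs j := fun j => by rw [ho'es j]
      have hP' : ∀ e, Pd e → o' e = o₀ e := by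
        intro e hPe
        have hnot : ¬ ∃ j, es j = e := by
          rintro ⟨j, rfl⟩
          obtain ⟨p, hp1, hp2, _⟩ := hPe
          have : p.1 ∈ ends (es j) := by rw [hp1]; exact Sym2.mem_mk_left _ _
          rw [hends j] at this
          rcases Sym2.mem_iff.mp this with h1 | h1
          · exact hp2 ⟨n, vs, es, ⟨hn, hvinj, heinj, hends⟩, j, h1.symm⟩
          · exact hp2 ⟨n, vs, es, ⟨hn, hvinj, heinj, hends⟩, j + 1, h1.symm⟩
        rw [ho']
        simp only [dif_neg hnot]
        exact hagree e hPe
      have hsub : Finset.univ.filter (fun w => IsSink ends o' w) ⊆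
          (Finset.univ.filter (fun w => IsSink ends o w)).erase v := by
        intro w hw
        rw [Finset.mem_filter] at hw
        have hwo' := hw.2
        have hwv : w ≠ v := by
          rintro rfl
          exact hwo' (es i) (by rw [hcycle_out i]; exact hvi)
        have hwo : IsSink ends o w := by
          by_contra hns
          unfold IsSink at hns
          push_neg at hns
          obtain ⟨e', he'⟩ := hout w hns
          exact hwo' e' he'
        rw [Finset.mem_erase, Finset.mem_filter]
        exact ⟨hwv, Finset.mem_univ w, hwo⟩
      refine IH o' hP' ?_
      have hv_mem : v ∈ Finset.univ.filter (fun w => IsSink ends o w) := by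
        rw [Finset.mem_filter]; exact ⟨Finset.mem_univ v, hv⟩
      have h1 := Finset.card_le_card hsub
      rw [Finset.card_erase_of_mem hv_mem] at h1
      omega
  exact main (Finset.univ.filter (fun w => IsSink ends o₀ w)).card o₀ (fun _ _ => rfl) le_rfl

end SFOExist


section Determined

variable {V E : Type} [Fintype V] [Fintype E] [DecidableEq V] [DecidableEq E]
variable (ends : E → Sym2 V) (C : Orientation ends → V)

lemma runPop_length_le (ω : PopSpace ends) : ∀ n, (runPop ends C ω n).length ≤ n
  | 0 => le_rfl
  | (n + 1) => by
    rw [runPop]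
    by_cases h : IsSFO ends (orientAfter ends ω (runPop ends C ω n))
    · simp only [h, if_true]
      exact (runPop_length_le ω n).trans (by omega)
    · simp only [h, if_false, List.length_append, List.length_singleton]
      have := runPop_length_le ω n
      omega

lemma orientAfter_determined {ω ω' : PopSpace ends} {c : E → ℕ}
    (h : ∀ e j, j ≤ c e → ω' e j = ω e j) {l : List V}
    (hl : ∀ e, l.countP (fun w => decide (w ∈ ends e)) ≤ c e) :
    orientAfter ends ω' l = orientAfter ends ω l := by
  funext e
  exact h e _ (hl e)

lemma runPop_determined {ω ω' : PopSpace ends} {n : ℕ}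
    (h : ∀ e j, j ≤ (runPop ends C ω n).countP (fun w => decide (w ∈ ends e)) → ω' e j = ω e j) :
    ∀ k, k ≤ n → runPop ends C ω' k = runPop ends C ω k := by
  intro k hk
  induction k with
  | zero => rfl
  | succ m IH =>
    have hm := IH (by omega)
    have hcount : ∀ e, (runPop ends C ω m).countP (fun w => decide (w ∈ ends e)) ≤
        (runPop ends C ω n).countP (fun w => decide (w ∈ ends e)) := by
      intro e
      exact ((runPop_prefix ends C (show m ≤ n by omega)).sublist).countP_le
    have horient : orientAfter ends ω' (runPop ends C ω m) =
        orientAfter ends ω (runPop ends C ω m) :=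
      orientAfter_determined ends h hcount
    show runPop ends C ω' (m + 1) = runPop ends C ω (m + 1)
    rw [runPop, runPop, hm, horient]

lemma runPop_orient_determined {ω ω' : PopSpace ends} {n : ℕ}
    (h : ∀ e j, j ≤ (runPop ends C ω n).countP (fun w => decide (w ∈ ends e)) → ω' e j = ω e j) :
    orientAfter ends ω' (runPop ends C ω' n) = orientAfter ends ω (runPop ends C ω n) := by
  rw [runPop_determined ends C h n le_rfl]
  exact orientAfter_determined ends h (fun e => le_rfl)

lemma runPop_determined_le {ω ω' : PopSpace ends} {n : ℕ}
    (h : ∀ e j, j ≤ n → ω' e j = ω e j) :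
    runPop ends C ω' n = runPop ends C ω n ∧
      orientAfter ends ω' (runPop ends C ω' n) = orientAfter ends ω (runPop ends C ω n) := by
  have h' : ∀ e j, j ≤ (runPop ends C ω n).countP (fun w => decide (w ∈ ends e)) →
      ω' e j = ω e j := by
    intro e j hj
    refine h e j (hj.trans ?_)
    exact List.countP_le_length.trans (runPop_length_le ends C ω n)
  exact ⟨runPop_determined ends C h' n le_rfl, runPop_orient_determined ends C h'⟩

end Determined

section MeasUtil

variable {V E : Type} [Fintype V] [Fintype E] [DecidableEq V] [DecidableEq E]
variable (ends : E → Sym2 V)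

instance edgeOrient_fintype (e : E) : Fintype (EdgeOrient ends e) :=
  inferInstanceAs (Fintype {p : V × V // ends e = s(p.1, p.2)})

lemma measurableSet_edgeOrient (e : E) (s : Set (EdgeOrient ends e)) : MeasurableSet s :=
  MeasurableSpace.measurableSet_top

lemma measurable_from_edgeOrient {β : Type} [MeasurableSpace β] {e : E}
    (f : EdgeOrient ends e → β) : Measurable f :=
  fun _ _ => MeasurableSpace.measurableSet_top

lemma measurable_eval (e : E) (k : ℕ) :
    Measurable (fun ω : PopSpace ends => ω e k) :=
  (measurable_pi_apply k).comp (measurable_pi_apply (X := fun e => ℕ → EdgeOrient ends e) e)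

/-- The restriction of the stack configuration to a finite set of coordinates. -/
def tauS (S : Finset (E × ℕ)) (ω : PopSpace ends) : ∀ p : S, EdgeOrient ends (p : E × ℕ).1 :=
  fun p => ω (p : E × ℕ).1 (p : E × ℕ).2

/-- Extend a finite partial stack configuration by junk. -/
noncomputable def extFun (S : Finset (E × ℕ))
    (h : ∀ p : S, EdgeOrient ends (p : E × ℕ).1) : PopSpace ends :=
  fun e j => if hm : (e, j) ∈ S then h ⟨(e, j), hm⟩ else Classical.arbitrary _

lemma extFun_tauS_agree (S : Finset (E × ℕ)) (ω : PopSpace ends) :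
    ∀ e j, (e, j) ∈ S → extFun ends S (tauS ends S ω) e j = ω e j := by
  intro e j hm
  simp only [extFun, dif_pos hm]
  rfl

lemma measurable_tauS (S : Finset (E × ℕ)) : Measurable (tauS ends S) :=
  measurable_pi_lambda _ (fun p => measurable_eval ends (p : E × ℕ).1 (p : E × ℕ).2)

lemma measurableSet_finite_pi (S : Finset (E × ℕ))
    (B : Set (∀ p : S, EdgeOrient ends (p : E × ℕ).1)) : MeasurableSet B := by
  classical
  have hsing : ∀ g : ∀ p : S, EdgeOrient ends (p : E × ℕ).1, MeasurableSet {g} := by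
    intro g
    have : {g} = ⋂ p : S, (fun f : ∀ p : S, EdgeOrient ends (p : E × ℕ).1 => f p) ⁻¹' {g p} := by
      ext f
      simp [funext_iff]
    rw [this]
    exact MeasurableSet.iInter fun p =>
      (measurable_pi_apply p) (measurableSet_edgeOrient ends _ _)
  have hcount : B.Countable := B.to_countable
  rw [← Set.biUnion_of_singleton B]
  exact MeasurableSet.biUnion hcount (fun g _ => hsing g)

lemma measurable_from_finite_pi (S : Finset (E × ℕ)) {β : Type} [MeasurableSpace β]
    (f : (∀ p : S, EdgeOrient ends (p : E × ℕ).1) → β) : Measurable f :=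
  fun _ _ => measurableSet_finite_pi ends S _

end MeasUtil


section MeasCorr

variable {V E V' E' : Type} [Fintype V] [Fintype E] [DecidableEq V] [DecidableEq E]
  [Fintype V'] [Fintype E'] [DecidableEq V'] [DecidableEq E'] [Nonempty V']
variable (ends : E → Sym2 V) (ends' : E' → Sym2 V') (ιV : V' → V) (ιE : E' → E)
variable (hιV : Function.Injective ιV) (hιE : Function.Injective ιE)
variable (hends : ∀ e, ends (ιE e) = Sym2.map ιV (ends' e))

lemma val_cast {e₁ e₂ : E} (h : e₁ = e₂) (x : EdgeOrient ends e₁) :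
    ((h ▸ x : EdgeOrient ends e₂) : V × V) = (x : V × V) := by
  subst h
  rfl

/-- Extend an assignment of orientations on the subgraph to the whole graph (by junk). -/
noncomputable def extOrient (hends : ∀ e, ends (ιE e) = Sym2.map ιV (ends' e))
    (q : ∀ (e' : E') (_ : ℕ), EdgeOrient ends' e') : ∀ (e : E) (_ : ℕ), EdgeOrient ends e :=
  fun e k =>
    if h : ∃ e', ιE e' = e then
      h.choose_spec ▸ (pushO ends ends' ιV ιE hends h.choose (q h.choose k))
    else Classical.arbitrary _

include hιE in
lemma extOrient_iota (q : ∀ (e' : E') (_ : ℕ), EdgeOrient ends' e') (e' : E') (k : ℕ) :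
    extOrient ends ends' ιV ιE hends q (ιE e') k =
      pushO ends ends' ιV ιE hends e' (q e' k) := by
  have hex : ∃ e'', ιE e'' = ιE e' := ⟨e', rfl⟩
  have hch : hex.choose = e' := hιE hex.choose_spec
  apply Subtype.ext
  have h1 : extOrient ends ends' ιV ιE hends q (ιE e') k =
      hex.choose_spec ▸ (pushO ends ends' ιV ιE hends hex.choose (q hex.choose k)) := by
    simp only [extOrient, dif_pos hex]
  rw [h1, val_cast]
  show ((pushO ends ends' ιV ιE hends hex.choose (q hex.choose k) : V × V)) =
    ((pushO ends ends' ιV ιE hends e' (q e' k) : V × V))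
  rw [hch]

include hιV hιE hends in
lemma pullSpace_preimage_atom (S : Finset (E' × ℕ)) (q : ∀ (e' : E') (_ : ℕ), EdgeOrient ends' e') :
    (pullSpace ends ends' ιV ιE hιV hends) ⁻¹'
        (⋂ p ∈ S, {ω' : PopSpace ends' | ω' p.1 p.2 = q p.1 p.2}) =
      ⋂ i ∈ S.image (fun p : E' × ℕ => (ιE p.1, p.2)),
        {ω : PopSpace ends | ω i.1 i.2 = extOrient ends ends' ιV ιE hends q i.1 i.2} := by
  ext ω
  simp only [Set.mem_preimage, Set.mem_iInter, Set.mem_setOf_eq]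
  constructor
  · intro h i hi
    obtain ⟨p, hp, rfl⟩ := Finset.mem_image.mp hi
    rw [extOrient_iota ends ends' ιV ιE hιE hends]
    have h2 : pullO ends ends' ιV ιE hιV hends p.1 (ω (ιE p.1) p.2) = q p.1 p.2 := h p hp
    have h3 := congrArg (pushO ends ends' ιV ιE hends p.1) h2
    rwa [pushO_pullO ends ends' ιV ιE hιV hends] at h3
  · intro h p hp
    have h2 := h (ιE p.1, p.2) (Finset.mem_image_of_mem _ hp)
    rw [extOrient_iota ends ends' ιV ιE hιE hends] at h2
    have h3 := congrArg (pullO ends ends' ιV ιE hιV hends p.1) h2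
    rw [pullO_pushO ends ends' ιV ιE hιV hends] at h3
    exact h3

include hιV hends in
lemma measurable_pullSpace : Measurable (pullSpace ends ends' ιV ιE hιV hends) :=
  measurable_pi_lambda _ fun e' => measurable_pi_lambda _ fun k =>
    (measurable_from_edgeOrient ends _).comp (measurable_eval ends (ιE e') k)

end MeasCorr

section StacksAtoms

variable {W F : Type} [Fintype W] [Fintype F] [DecidableEq W] [DecidableEq F]
variable (ends₀ : F → Sym2 W)

lemma stacks_atom {μ : Measure (PopSpace ends₀)} (hμ : StacksIID ends₀ μ)
    (T : Finset (F × ℕ)) (sets : ∀ p : F × ℕ, Set (EdgeOrient ends₀ p.1)) :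
    μ (⋂ p ∈ T, {ω | ω p.1 p.2 ∈ sets p}) = ∏ p ∈ T, μ {ω | ω p.1 p.2 ∈ sets p} :=
  hμ.1.measure_inter_preimage_eq_mul T (fun p _ => measurableSet_edgeOrient ends₀ p.1 (sets p))

lemma stacks_marginal {μ : Measure (PopSpace ends₀)} (hμ : StacksIID ends₀ μ)
    (e : F) (k : ℕ) (x : EdgeOrient ends₀ e) :
    μ {ω | ω e k = x} = ((Fintype.card (EdgeOrient ends₀ e) : ℝ≥0∞))⁻¹ := by
  have hset : {ω : PopSpace ends₀ | ω e k = x} = (fun ω : PopSpace ends₀ => ω e k) ⁻¹' {x} := by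
    ext ω; simp
  have hm : μ ((fun ω : PopSpace ends₀ => ω e k) ⁻¹' {x})
      = (PMF.uniformOfFintype (EdgeOrient ends₀ e)).toMeasure {x} := by
    rw [← hμ.2 e k, Measure.map_apply (measurable_eval ends₀ e k)
      (measurableSet_edgeOrient ends₀ e _)]
  rw [hset, hm, PMF.toMeasure_apply_singleton _ _ (measurableSet_edgeOrient ends₀ e _),
    PMF.uniformOfFintype_apply]

lemma stacks_atom_singleton {μ : Measure (PopSpace ends₀)} (hμ : StacksIID ends₀ μ)
    (T : Finset (F × ℕ)) (q : ∀ (e : F) (_ : ℕ), EdgeOrient ends₀ e) :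
    μ (⋂ p ∈ T, {ω | ω p.1 p.2 = q p.1 p.2}) =
      ∏ p ∈ T, ((Fintype.card (EdgeOrient ends₀ p.1) : ℝ≥0∞))⁻¹ := by
  have h1 := stacks_atom ends₀ hμ T (fun p => {q p.1 p.2})
  simp only [Set.mem_singleton_iff] at h1
  rw [h1]
  exact Finset.prod_congr rfl fun p _ => stacks_marginal ends₀ hμ p.1 p.2 _

end StacksAtoms


section TauSingleton

variable {W F : Type} [Fintype W] [Fintype F] [DecidableEq W] [DecidableEq F]
variable (ends₀ : F → Sym2 W)

lemma tau_preimage_singleton (S : Finset (F × ℕ)) (g : ∀ p : S, EdgeOrient ends₀ (p : F × ℕ).1) :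
    tauS ends₀ S ⁻¹' {g} =
      ⋂ p ∈ S, {ω : PopSpace ends₀ | ω p.1 p.2 = extFun ends₀ S g p.1 p.2} := by
  ext ω
  simp only [Set.mem_preimage, Set.mem_singleton_iff, Set.mem_iInter, Set.mem_setOf_eq]
  constructor
  · rintro rfl p hp
    exact (extFun_tauS_agree ends₀ S ω p.1 p.2 hp).symm
  · intro h
    funext p
    show ω (p : F × ℕ).1 (p : F × ℕ).2 = g p
    rw [h (p : F × ℕ) p.2]
    show extFun ends₀ S g (p : F × ℕ).1 (p : F × ℕ).2 = g p
    simp only [extFun]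
    rw [dif_pos (show ((p : F × ℕ).1, (p : F × ℕ).2) ∈ S from p.2)]

end TauSingleton

section MapTau

variable {V E V' E' : Type} [Fintype V] [Fintype E] [DecidableEq V] [DecidableEq E]
  [Fintype V'] [Fintype E'] [DecidableEq V'] [DecidableEq E'] [Nonempty V']
variable (ends : E → Sym2 V) (ends' : E' → Sym2 V') (ιV : V' → V) (ιE : E' → E)
variable (hιV : Function.Injective ιV) (hιE : Function.Injective ιE)
variable (hends : ∀ e, ends (ιE e) = Sym2.map ιV (ends' e))
variable (P : Measure (PopSpace ends)) (hP : StacksIID ends P)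
variable (P' : Measure (PopSpace ends')) (hP' : StacksIID ends' P')

include hιV hιE hends hP in
lemma pullback_atom (S : Finset (E' × ℕ)) (q : ∀ (e' : E') (_ : ℕ), EdgeOrient ends' e') :
    P ((pullSpace ends ends' ιV ιE hιV hends) ⁻¹'
        (⋂ p ∈ S, {ω' : PopSpace ends' | ω' p.1 p.2 = q p.1 p.2})) =
      ∏ p ∈ S, ((Fintype.card (EdgeOrient ends' p.1) : ℝ≥0∞))⁻¹ := by
  rw [pullSpace_preimage_atom ends ends' ιV ιE hιV hιE hends S q]
  rw [stacks_atom_singleton ends hP (S.image fun p : E' × ℕ => (ιE p.1, p.2))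
    (extOrient ends ends' ιV ιE hends q)]
  rw [Finset.prod_image]
  · apply Finset.prod_congr rfl
    intro p _
    have hcard : Fintype.card (EdgeOrient ends (ιE p.1)) = Fintype.card (EdgeOrient ends' p.1) :=
      Fintype.card_congr (pullEquiv ends ends' ιV ιE hιV hends p.1)
    rw [hcard]
  · intro p₁ _ p₂ _ h
    injection h with h1 h2
    exact Prod.ext (hιE h1) h2

include hιV hιE hends hP hP' in
lemma map_tau_eq (S : Finset (E' × ℕ)) :
    (P.map (pullSpace ends ends' ιV ιE hιV hends)).map (tauS ends' S) = P'.map (tauS ends' S) := by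
  have hΦm := measurable_pullSpace ends ends' ιV ιE hιV hends
  have hτm := measurable_tauS ends' S
  have hsing : ∀ g : ∀ p : S, EdgeOrient ends' (p : E' × ℕ).1,
      ((P.map (pullSpace ends ends' ιV ιE hιV hends)).map (tauS ends' S)) {g}
        = (P'.map (tauS ends' S)) {g} := by
    intro g
    rw [Measure.map_apply hτm (measurableSet_finite_pi ends' S _),
        Measure.map_apply hτm (measurableSet_finite_pi ends' S _),
        Measure.map_apply hΦm (hτm (measurableSet_finite_pi ends' S _)),
        tau_preimage_singleton ends' S g,
        pullback_atom ends ends' ιV ιE hιV hιE hends P hP S (extFun ends' S g),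
        stacks_atom_singleton ends' hP' S (extFun ends' S g)]
  have expand : ∀ (μ : Measure (∀ p : S, EdgeOrient ends' (p : E' × ℕ).1))
      (s : Set (∀ p : S, EdgeOrient ends' (p : E' × ℕ).1)), μ s = ∑' x : s, μ {x.1} := by
    intro μ s
    conv_lhs => rw [← Set.biUnion_of_singleton s]
    exact measure_biUnion s.to_countable (fun x _ y _ hxy => Set.disjoint_singleton.mpr hxy)
      (fun b _ => measurableSet_finite_pi ends' S _)
  ext s _
  rw [expand, expand]
  exact tsum_congr fun b => hsing b

include hιV hιE hends hP hP' in
lemma pull_tau_measure (S : Finset (E' × ℕ))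
    (B : Set (∀ p : S, EdgeOrient ends' (p : E' × ℕ).1)) :
    P ((pullSpace ends ends' ιV ιE hιV hends) ⁻¹' (tauS ends' S ⁻¹' B)) =
      P' (tauS ends' S ⁻¹' B) := by
  have hΦm := measurable_pullSpace ends ends' ιV ιE hιV hends
  have hτm := measurable_tauS ends' S
  have hB := measurableSet_finite_pi ends' S B
  rw [← Measure.map_apply hΦm (hτm hB), ← Measure.map_apply hτm hB,
    map_tau_eq ends ends' ιV ιE hιV hιE hends P hP P' hP' S,
    Measure.map_apply hτm hB]

end MapTau


section Termination

variable {V' E' : Type} [Fintype V'] [Fintype E'] [DecidableEq V'] [DecidableEq E']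
variable (ends' : E' → Sym2 V') (C' : Orientation ends' → V')

lemma exists_ofFn {α : Type} (l : List α) {n : ℕ} (h : l.length = n) :
    ∃ g : Fin n → α, List.ofFn g = l := by
  subst h
  exact ⟨l.get, List.ofFn_get l⟩

/-- The event that popping is not finished after `m` steps. -/
def AliveSet (m : ℕ) : Set (PopSpace ends') :=
  {ω | ¬ IsSFO ends' (orientAfter ends' ω (runPop ends' C' ω m))}

lemma set_tau_eq (S : Finset (E' × ℕ)) (A : Set (PopSpace ends'))
    (hA : ∀ ω, (ω ∈ A ↔ extFun ends' S (tauS ends' S ω) ∈ A)) :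
    A = tauS ends' S ⁻¹' ((extFun ends' S) ⁻¹' A) := by
  ext ω
  exact hA ω

lemma aliveSet_tau (m : ℕ) :
    AliveSet ends' C' m = tauS ends' (Finset.univ ×ˢ Finset.range (m+1)) ⁻¹'
      ((extFun ends' (Finset.univ ×ˢ Finset.range (m+1))) ⁻¹' AliveSet ends' C' m) := by
  apply set_tau_eq
  intro ω
  set S := (Finset.univ ×ˢ Finset.range (m+1) : Finset (E' × ℕ))
  have hagree : ∀ e j, j ≤ m → extFun ends' S (tauS ends' S ω) e j = ω e j := by
    intro e j hj
    exact extFun_tauS_agree ends' S ω e j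
      (Finset.mem_product.mpr ⟨Finset.mem_univ e, Finset.mem_range.mpr (by omega)⟩)
  have h2 := runPop_determined_le ends' C' hagree
  unfold AliveSet
  rw [Set.mem_setOf_eq, Set.mem_setOf_eq, h2.2]

lemma measurableSet_aliveSet (m : ℕ) : MeasurableSet (AliveSet ends' C' m) := by
  rw [aliveSet_tau ends' C' m]
  exact measurable_tauS ends' _ (measurableSet_finite_pi ends' _ _)

variable {n : ℕ}

/-- The stack counts consumed by the popping sequence `List.ofFn g`. -/
def cg (g : Fin n → V') (e : E') : ℕ :=
  (List.ofFn g).countP (fun w => decide (w ∈ ends' e))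

lemma cg_le (g : Fin n → V') (e : E') : cg ends' g e ≤ n :=
  le_trans List.countP_le_length (by rw [List.length_ofFn])

def S1 (g : Fin n → V') : Finset (E' × ℕ) :=
  (Finset.univ ×ˢ Finset.range (n+1)).filter (fun p => p.2 ≤ cg ends' g p.1)

def S2 (g : Fin n → V') : Finset (E' × ℕ) :=
  (Finset.univ.image fun e => (e, cg ends' g e + 1)) ∪
    (Finset.univ.image fun e => (e, cg ends' g e + 2))

lemma mem_S1 (g : Fin n → V') (e : E') (j : ℕ) :
    (e, j) ∈ S1 ends' g ↔ j ≤ cg ends' g e := by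
  unfold S1
  rw [Finset.mem_filter, Finset.mem_product, Finset.mem_range]
  constructor
  · rintro ⟨_, h⟩; exact h
  · intro h
    have := cg_le ends' g e
    exact ⟨⟨Finset.mem_univ e, by omega⟩, h⟩

lemma mem_S2 (g : Fin n → V') (p : E' × ℕ) :
    p ∈ S2 ends' g ↔ p.2 = cg ends' g p.1 + 1 ∨ p.2 = cg ends' g p.1 + 2 := by
  unfold S2
  rw [Finset.mem_union, Finset.mem_image, Finset.mem_image]
  constructor
  · rintro (⟨e, _, rfl⟩ | ⟨e, _, rfl⟩)
    · exact Or.inl rfl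
    · exact Or.inr rfl
  · rcases p with ⟨e, j⟩
    rintro (h | h) <;> simp only at h <;> subst h
    · exact Or.inl ⟨e, Finset.mem_univ e, rfl⟩
    · exact Or.inr ⟨e, Finset.mem_univ e, rfl⟩

lemma disj_S1_S2 (g : Fin n → V') : Disjoint (S1 ends' g) (S2 ends' g) := by
  rw [Finset.disjoint_left]
  rintro ⟨e, j⟩ h1 h2
  rw [mem_S1] at h1
  rw [mem_S2] at h2
  simp only at h1 h2
  omega

/-- The event that the first `n` pops are given by `g` and popping is not finished. -/
def Ag (g : Fin n → V') : Set (PopSpace ends') :=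
  {ω | runPop ends' C' ω n = List.ofFn g ∧
    ¬ IsSFO ends' (orientAfter ends' ω (runPop ends' C' ω n))}

/-- The event that the next two stack entries under each edge all show `σ`. -/
def Eg (σ : Orientation ends') (g : Fin n → V') : Set (PopSpace ends') :=
  ⋂ p ∈ S2 ends' g, {ω : PopSpace ends' | ω p.1 p.2 = σ p.1}

lemma Ag_tau (g : Fin n → V') :
    Ag ends' C' g = tauS ends' (S1 ends' g) ⁻¹'
      ((extFun ends' (S1 ends' g)) ⁻¹' Ag ends' C' g) := by
  apply set_tau_eq
  intro ω
  set S := S1 ends' g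
  set ω' := extFun ends' S (tauS ends' S ω) with hω'
  constructor
  · rintro ⟨hrun, halive⟩
    have hagree : ∀ e j, j ≤ (runPop ends' C' ω n).countP (fun w => decide (w ∈ ends' e)) →
        ω' e j = ω e j := by
      intro e j hj
      rw [hrun] at hj
      exact extFun_tauS_agree ends' S ω e j ((mem_S1 ends' g e j).mpr hj)
    have h1 := runPop_determined ends' C' hagree n le_rfl
    have h2 := runPop_orient_determined ends' C' hagree
    exact ⟨h1.trans hrun, by rwa [h2]⟩
  · rintro ⟨hrun, halive⟩
    have hagree : ∀ e j, j ≤ (runPop ends' C' ω' n).countP (fun w => decide (w ∈ ends' e)) →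
        ω e j = ω' e j := by
      intro e j hj
      rw [hrun] at hj
      exact (extFun_tauS_agree ends' S ω e j ((mem_S1 ends' g e j).mpr hj)).symm
    have h1 := runPop_determined ends' C' hagree n le_rfl
    have h2 := runPop_orient_determined ends' C' hagree
    exact ⟨h1.trans hrun, by rwa [h2]⟩

lemma Eg_tau (σ : Orientation ends') (g : Fin n → V') :
    Eg ends' σ g = tauS ends' (S2 ends' g) ⁻¹'
      ((extFun ends' (S2 ends' g)) ⁻¹' Eg ends' σ g) := by
  apply set_tau_eq
  intro ω
  unfold Eg
  simp only [Set.mem_iInter, Set.mem_setOf_eq]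
  constructor
  · intro h p hp
    rw [extFun_tauS_agree ends' (S2 ends' g) ω p.1 p.2 hp]
    exact h p hp
  · intro h p hp
    rw [← extFun_tauS_agree ends' (S2 ends' g) ω p.1 p.2 hp]
    exact h p hp

lemma measurableSet_Ag (g : Fin n → V') : MeasurableSet (Ag ends' C' g) := by
  rw [Ag_tau ends' C' g]
  exact measurable_tauS ends' _ (measurableSet_finite_pi ends' _ _)

lemma measurableSet_Eg (σ : Orientation ends') (g : Fin n → V') :
    MeasurableSet (Eg ends' σ g) := by
  rw [Eg_tau ends' σ g]
  exact measurable_tauS ends' _ (measurableSet_finite_pi ends' _ _)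

variable (P' : Measure (PopSpace ends')) [IsProbabilityMeasure P']

/-- The probability that both upcoming entries of every edge show `σ`. -/
noncomputable def pprob : ℝ≥0∞ :=
  (∏ e : E', ((Fintype.card (EdgeOrient ends' e) : ℝ≥0∞))⁻¹) *
    (∏ e : E', ((Fintype.card (EdgeOrient ends' e) : ℝ≥0∞))⁻¹)

lemma pprob_pos : pprob ends' ≠ 0 := by
  unfold pprob
  apply mul_ne_zero <;>
  · rw [Finset.prod_ne_zero_iff]
    intro e _
    exact ENNReal.inv_ne_zero.mpr (ENNReal.natCast_ne_top _)

lemma pprob_le_one : pprob ends' ≤ 1 := by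
  unfold pprob
  have h : (∏ e : E', ((Fintype.card (EdgeOrient ends' e) : ℝ≥0∞))⁻¹) ≤ 1 := by
    apply Finset.prod_le_one
    · intro e _; exact zero_le
    · intro e _
      rw [ENNReal.inv_le_one]
      exact_mod_cast Nat.one_le_iff_ne_zero.mpr (Fintype.card_ne_zero)
  calc _ ≤ 1 * 1 := mul_le_mul' h h
  _ = 1 := one_mul 1

lemma Eg_prob (hP' : StacksIID ends' P') (σ : Orientation ends') (g : Fin n → V') :
    P' (Eg ends' σ g) = pprob ends' := by
  have h1 : P' (Eg ends' σ g) = ∏ p ∈ S2 ends' g,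
      ((Fintype.card (EdgeOrient ends' p.1) : ℝ≥0∞))⁻¹ :=
    stacks_atom_singleton ends' hP' (S2 ends' g) (fun e _ => σ e)
  rw [h1]
  unfold S2
  rw [Finset.prod_union]
  · congr 1 <;>
    · rw [Finset.prod_image]
      intro e₁ _ e₂ _ h
      injection h
  · rw [Finset.disjoint_left]
    rintro ⟨e, j⟩ h1 h2
    rw [Finset.mem_image] at h1 h2
    obtain ⟨e₁, _, he₁⟩ := h1
    obtain ⟨e₂, _, he₂⟩ := h2
    injection he₁ with k1 k2
    injection he₂ with k3 k4
    subst k1; subst k3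
    omega

lemma Ag_inter_Eg_prob (hP' : StacksIID ends' P') (σ : Orientation ends') (g : Fin n → V') :
    P' (Ag ends' C' g ∩ Eg ends' σ g) = P' (Ag ends' C' g) * pprob ends' := by
  have hIF := hP'.1.indepFun_finset (S1 ends' g) (S2 ends' g) (disj_S1_S2 ends' g)
    (fun p => measurable_eval ends' p.1 p.2)
  rw [indepFun_iff_measure_inter_preimage_eq_mul] at hIF
  have hB1 := measurableSet_finite_pi ends' (S1 ends' g)
    ((extFun ends' (S1 ends' g)) ⁻¹' Ag ends' C' g)
  have hB2 := measurableSet_finite_pi ends' (S2 ends' g)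
    ((extFun ends' (S2 ends' g)) ⁻¹' Eg ends' σ g)
  have key : P' (tauS ends' (S1 ends' g) ⁻¹' ((extFun ends' (S1 ends' g)) ⁻¹' Ag ends' C' g) ∩
      tauS ends' (S2 ends' g) ⁻¹' ((extFun ends' (S2 ends' g)) ⁻¹' Eg ends' σ g)) =
      P' (tauS ends' (S1 ends' g) ⁻¹' ((extFun ends' (S1 ends' g)) ⁻¹' Ag ends' C' g)) *
      P' (tauS ends' (S2 ends' g) ⁻¹' ((extFun ends' (S2 ends' g)) ⁻¹' Eg ends' σ g)) :=
    hIF _ _ hB1 hB2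
  rw [← Ag_tau ends' C' g, ← Eg_tau ends' σ g] at key
  rw [key, Eg_prob ends' P' hP' σ g]

/-- If `ω` lies in `Ag g ∩ Eg σ g` then popping finishes within `card V'` more steps. -/
lemma window_applied (hC' : IsChoiceRule ends' C') {σ : Orientation ends'}
    (hσ : IsSFO ends' σ) (g : Fin n → V') (ω : PopSpace ends')
    (hA : ω ∈ Ag ends' C' g) (hE : ω ∈ Eg ends' σ g) :
    ω ∉ AliveSet ends' C' (n + Fintype.card V') := by
  obtain ⟨hrun, _⟩ := hA
  have hEg : ∀ e, ω e ((runPop ends' C' ω n).countP (fun w => decide (w ∈ ends' e)) + 1) = σ e ∧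
      ω e ((runPop ends' C' ω n).countP (fun w => decide (w ∈ ends' e)) + 2) = σ e := by
    intro e
    have hc : (runPop ends' C' ω n).countP (fun w => decide (w ∈ ends' e)) = cg ends' g e := by
      rw [hrun]; rfl
    rw [hc]
    unfold Eg at hE
    simp only [Set.mem_iInter, Set.mem_setOf_eq] at hE
    constructor
    · exact hE (e, cg ends' g e + 1) ((mem_S2 ends' g _).mpr (Or.inl rfl))
    · exact hE (e, cg ends' g e + 2) ((mem_S2 ends' g _).mpr (Or.inr rfl))
  obtain ⟨s, hs, hsfo⟩ := window ends' C' hC' hσ ω n hEg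
  intro halive
  have hfr := runPop_freeze ends' C' hsfo (Fintype.card V' - s)
  have : n + s + (Fintype.card V' - s) = n + Fintype.card V' := by omega
  rw [this] at hfr
  unfold AliveSet at halive
  rw [Set.mem_setOf_eq, hfr] at halive
  exact halive hsfo

lemma sum_partition (hC' : IsChoiceRule ends' C') (T : Set (PopSpace ends'))
    (hT : MeasurableSet T) (hsub : T ⊆ AliveSet ends' C' n) :
    P' T = ∑ g : Fin n → V', P' (T ∩ Ag ends' C' g) := by
  have hcover : T = ⋃ g ∈ (Finset.univ : Finset (Fin n → V')), (T ∩ Ag ends' C' g) := by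
    ext ω
    simp only [Set.mem_iUnion, Set.mem_inter_iff, Finset.mem_univ, exists_true_left]
    constructor
    · intro hω
      have halive := hsub hω
      unfold AliveSet at halive
      rw [Set.mem_setOf_eq] at halive
      have hlen : (runPop ends' C' ω n).length = n :=
        runPop_length ends' C' halive n (by omega)
      obtain ⟨g, hg⟩ := exists_ofFn _ hlen
      exact ⟨g, hω, hg.symm, halive⟩
    · rintro ⟨g, hω, _⟩
      exact hω
  have hdisj : Set.PairwiseDisjoint ((Finset.univ : Finset (Fin n → V')) : Set (Fin n → V'))
      (fun g => T ∩ Ag ends' C' g) := by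
    intro g₁ _ g₂ _ hne
    rw [Function.onFun, Set.disjoint_left]
    rintro ω ⟨_, h1, _⟩ ⟨_, h2, _⟩
    exact hne (List.ofFn_inj.mp (h1.symm.trans h2))
  have hmeas : ∀ g ∈ (Finset.univ : Finset (Fin n → V')),
      MeasurableSet (T ∩ Ag ends' C' g) := fun g _ => hT.inter (measurableSet_Ag ends' C' g)
  have hsum := measure_biUnion_finset (μ := P') hdisj hmeas
  rw [← hcover] at hsum
  exact hsum

lemma alive_recursion (hC' : IsChoiceRule ends' C') {σ : Orientation ends'}
    (hσ : IsSFO ends' σ) (hP' : StacksIID ends' P') :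
    P' (AliveSet ends' C' (n + Fintype.card V')) ≤
      (1 - pprob ends') * P' (AliveSet ends' C' n) := by
  have hsub1 : AliveSet ends' C' (n + Fintype.card V') ⊆ AliveSet ends' C' n := by
    intro ω hω
    exact alive_mono ends' C' (by omega) hω
  rw [sum_partition ends' C' P' hC' _ (measurableSet_aliveSet ends' C' _) hsub1]
  rw [sum_partition ends' C' P' hC' (AliveSet ends' C' n) (measurableSet_aliveSet ends' C' n)
    (fun ω h => h), Finset.mul_sum]
  apply Finset.sum_le_sum
  intro g _
  -- the `g`-cell of the alive event avoids `Eg`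
  have hsub2 : AliveSet ends' C' (n + Fintype.card V') ∩ Ag ends' C' g ⊆
      Ag ends' C' g \ (Ag ends' C' g ∩ Eg ends' σ g) := by
    rintro ω ⟨h1, h2⟩
    refine ⟨h2, ?_⟩
    rintro ⟨_, hEg⟩
    exact window_applied ends' C' hC' hσ g ω h2 hEg h1
  refine (measure_mono hsub2).trans ?_
  rw [measure_diff (Set.inter_subset_left)
    ((measurableSet_Ag ends' C' g).inter (measurableSet_Eg ends' σ g)).nullMeasurableSet
    (measure_ne_top P' _)]
  rw [Ag_inter_Eg_prob ends' C' P' hP' σ g]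
  -- a - a * p ≤ (1 - p) * a
  have hANn : AliveSet ends' C' n ∩ Ag ends' C' g = Ag ends' C' g := by
    apply Set.inter_eq_self_of_subset_right
    rintro ω ⟨_, h⟩
    exact h
  rw [hANn]
  rw [tsub_le_iff_right]
  calc P' (Ag ends' C' g)
      = ((1 - pprob ends') + pprob ends') * P' (Ag ends' C' g) := by
        rw [tsub_add_cancel_of_le (pprob_le_one ends'), one_mul]
  _ = (1 - pprob ends') * P' (Ag ends' C' g) + P' (Ag ends' C' g) * pprob ends' := by
        ring
  _ ≤ _ := le_rfl

lemma alive_pow (hC' : IsChoiceRule ends' C') {σ : Orientation ends'}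
    (hσ : IsSFO ends' σ) (hP' : StacksIID ends' P') (k : ℕ) :
    P' (AliveSet ends' C' (Fintype.card V' * k)) ≤ (1 - pprob ends') ^ k := by
  induction k with
  | zero =>
    rw [pow_zero, Nat.mul_zero]
    exact prob_le_one
  | succ k IH =>
    have h1 : Fintype.card V' * (k + 1) = Fintype.card V' * k + Fintype.card V' := by ring
    rw [h1, pow_succ]
    calc P' (AliveSet ends' C' (Fintype.card V' * k + Fintype.card V'))
        ≤ (1 - pprob ends') * P' (AliveSet ends' C' (Fintype.card V' * k)) :=
          alive_recursion ends' C' P' hC' hσ hP'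
    _ ≤ (1 - pprob ends') * (1 - pprob ends') ^ k := by
          exact mul_le_mul_right IH _
    _ = (1 - pprob ends') ^ k * (1 - pprob ends') := by ring

end Termination


lemma natCast_iSup_toENNReal (c : ℕ → ℕ) :
    (ENat.toENNReal (⨆ k, (c k : ℕ∞))) = ⨆ k, ((c k : ℕ) : ℝ≥0∞) := by
  by_cases hbd : ∃ M : ℕ, ∀ k, c k ≤ M
  · obtain ⟨M, hM⟩ := hbd
    have hne : (Set.range c).Nonempty := ⟨c 0, 0, rfl⟩
    have hbdd : BddAbove (Set.range c) := ⟨M, by rintro x ⟨k, rfl⟩; exact hM k⟩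
    obtain ⟨K, hK⟩ := Nat.sSup_mem hne hbdd
    have hmax : ∀ k, c k ≤ c K := by
      intro k
      rw [hK]
      exact le_csSup hbdd ⟨k, rfl⟩
    have h1 : (⨆ k, (c k : ℕ∞)) = (c K : ℕ∞) :=
      le_antisymm (iSup_le fun k => Nat.cast_le.mpr (hmax k))
        (le_iSup (fun k => ((c k : ℕ) : ℕ∞)) K)
    have h2 : (⨆ k, ((c k : ℕ) : ℝ≥0∞)) = ((c K : ℕ) : ℝ≥0∞) :=
      le_antisymm (iSup_le fun k => Nat.cast_le.mpr (hmax k))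
        (le_iSup (fun k => ((c k : ℕ) : ℝ≥0∞)) K)
    rw [h1, h2]
    exact ENat.toENNReal_coe _
  · push_neg at hbd
    have h1 : (⨆ k, (c k : ℕ∞)) = ⊤ := by
      by_contra hne
      set m : ℕ∞ := ⨆ k, (c k : ℕ∞) with hmdef
      have hm : ((m.toNat : ℕ) : ℕ∞) = m := ENat.coe_toNat hne
      obtain ⟨k, hk⟩ := hbd m.toNat
      have hle := le_iSup (fun k => ((c k : ℕ) : ℕ∞)) k
      rw [← hmdef, ← hm, Nat.cast_le] at hle
      omega
    have h2 : (⨆ k, ((c k : ℕ) : ℝ≥0∞)) = ⊤ := by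
      by_contra hne
      obtain ⟨M, hM⟩ := ENNReal.exists_nat_gt hne
      obtain ⟨k, hk⟩ := hbd M
      have hle := le_iSup (fun k => ((c k : ℕ) : ℝ≥0∞)) k
      have hlt : ((c k : ℕ) : ℝ≥0∞) < M := lt_of_le_of_lt hle hM
      rw [Nat.cast_lt] at hlt
      omega
    rw [h1, h2]
    rfl


/-- Monotonicity.  If `H ∈ S` is a subgraph of `G ∈ S` (given by
injections of the vertex and edge sets which respect endpoints), then for every vertex
`v` of `H`, `E Q(H, v) ≥ E Q(G, v)` (expectations for sink popping with i.i.d. uniform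
stacks, with arbitrary choice rules, on the respective graphs). -/
theorem monotonicity
    {V' E' : Type} [Fintype V'] [Fintype E'] [DecidableEq V'] [DecidableEq E']
    (ends : E → Sym2 V) (ends' : E' → Sym2 V')
    (hloop : OneLoopPerVertex ends) (hloop' : OneLoopPerVertex ends')
    (ιV : V' → V) (ιE : E' → E)
    (hιV : Function.Injective ιV) (hιE : Function.Injective ιE)
    (hends : ∀ e, ends (ιE e) = Sym2.map ιV (ends' e))
    (hS : InS ends) (hS' : InS ends')
    (P : Measure (PopSpace ends)) [IsProbabilityMeasure P] (hP : StacksIID ends P)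
    (P' : Measure (PopSpace ends')) [IsProbabilityMeasure P'] (hP' : StacksIID ends' P')
    (C : Orientation ends → V) (hC : IsChoiceRule ends C)
    (C' : Orientation ends' → V') (hC' : IsChoiceRule ends' C')
    (v : V') :
    ∫⁻ ω, (popCount ends C ω (ιV v) : ℝ≥0∞) ∂P
      ≤ ∫⁻ ω, (popCount ends' C' ω v : ℝ≥0∞) ∂P' := by
  classical
  haveI hne' : Nonempty V' := ⟨v⟩
  obtain ⟨σ, hσ⟩ := exists_sfo ends' hS'
  set Φ := pullSpace ends ends' ιV ιE hιV hends with hΦdef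
  have hΦm : Measurable Φ := measurable_pullSpace ends ends' ιV ιE hιV hends
  -- pointwise domination wherever the run on the subgraph terminates
  have hpoint : ∀ ω : PopSpace ends,
      (∃ m, IsSFO ends' (orientAfter ends' (Φ ω) (runPop ends' C' (Φ ω) m))) →
      (popCount ends C ω (ιV v) : ℝ≥0∞) ≤ (popCount ends' C' (Φ ω) v : ℝ≥0∞) := by
    rintro ω ⟨m, hm⟩
    have hdom : popCount ends C ω (ιV v) ≤ popCount ends' C' (Φ ω) v := by
      show (⨆ k, ((runPop ends C ω k).count (ιV v) : ℕ∞)) ≤ popCount ends' C' (Φ ω) v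
      apply iSup_le
      intro k
      have hlegal : LegalL ends ω (runPop ends C ω k) := legal_runPop ends C hC ω k
      have htr := legal_trList ends ends' ιV ιE hιV hends (runPop ends C ω k) ω hlegal
      have hm_legal : LegalL ends' (Φ ω) (runPop ends' C' (Φ ω) m) :=
        legal_runPop ends' C' hC' (Φ ω) m
      have hdia := diamond ends' (trList ιV (runPop ends C ω k)) (Φ ω)
        (runPop ends' C' (Φ ω) m) htr hm_legal hm v
      rw [count_trList ιV hιV v] at hdia
      calc ((runPop ends C ω k).count (ιV v) : ℕ∞)
          ≤ ((runPop ends' C' (Φ ω) m).count v : ℕ∞) := Nat.cast_le.mpr hdia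
      _ ≤ popCount ends' C' (Φ ω) v :=
            le_iSup (fun j => ((runPop ends' C' (Φ ω) j).count v : ℕ∞)) m
    exact ENat.toENNReal_le.mpr hdom
  -- the run on the subgraph terminates almost surely (transported to `P`)
  have hterm0 : P (Φ ⁻¹' (⋂ m, AliveSet ends' C' m)) = 0 := by
    have hbound : ∀ k, P (Φ ⁻¹' (⋂ m, AliveSet ends' C' m)) ≤ (1 - pprob ends') ^ k := by
      intro k
      calc P (Φ ⁻¹' (⋂ m, AliveSet ends' C' m))
          ≤ P (Φ ⁻¹' AliveSet ends' C' (Fintype.card V' * k)) :=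
            measure_mono (Set.preimage_mono (Set.iInter_subset _ _))
      _ = P' (AliveSet ends' C' (Fintype.card V' * k)) := by
            rw [aliveSet_tau ends' C' (Fintype.card V' * k)]
            exact pull_tau_measure ends ends' ιV ιE hιV hιE hends P hP P' hP' _ _
      _ ≤ (1 - pprob ends') ^ k := alive_pow ends' C' P' hC' hσ hP' k
    have hlt : (1 - pprob ends') < 1 :=
      ENNReal.sub_lt_self ENNReal.one_ne_top one_ne_zero (pprob_pos ends')
    have htend := ENNReal.tendsto_pow_atTop_nhds_zero_of_lt_one hlt
    have hle0 : P (Φ ⁻¹' (⋂ m, AliveSet ends' C' m)) ≤ 0 :=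
      ge_of_tendsto' htend hbound
    exact nonpos_iff_eq_zero.mp hle0
  have hae : ∀ᵐ ω ∂P,
      (popCount ends C ω (ιV v) : ℝ≥0∞) ≤ (popCount ends' C' (Φ ω) v : ℝ≥0∞) := by
    rw [MeasureTheory.ae_iff]
    refine measure_mono_null ?_ hterm0
    intro ω hω
    simp only [Set.mem_setOf_eq] at hω
    simp only [Set.mem_preimage, Set.mem_iInter]
    intro m
    show ¬ IsSFO ends' (orientAfter ends' (Φ ω) (runPop ends' C' (Φ ω) m))
    intro hsfo
    exact hω (hpoint ω ⟨m, hsfo⟩)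
  -- the two integrals of the subgraph pop count agree
  have hFk : ∀ ω' : PopSpace ends',
      (popCount ends' C' ω' v : ℝ≥0∞) = ⨆ k, (((runPop ends' C' ω' k).count v : ℕ) : ℝ≥0∞) :=
    fun ω' => natCast_iSup_toENNReal (fun k => (runPop ends' C' ω' k).count v)
  set F : ℕ → PopSpace ends' → ℝ≥0∞ :=
    fun k ω' => (((runPop ends' C' ω' k).count v : ℕ) : ℝ≥0∞) with hFdef
  have hFrep : ∀ k, F k = (fun h => F k (extFun ends' (Finset.univ ×ˢ Finset.range (k+1)) h)) ∘
      (tauS ends' (Finset.univ ×ˢ Finset.range (k+1))) := by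
    intro k
    funext ω'
    set S := (Finset.univ ×ˢ Finset.range (k+1) : Finset (E' × ℕ))
    have hagree : ∀ e j, j ≤ k → extFun ends' S (tauS ends' S ω') e j = ω' e j := by
      intro e j hj
      exact extFun_tauS_agree ends' S ω' e j
        (Finset.mem_product.mpr ⟨Finset.mem_univ e, Finset.mem_range.mpr (by omega)⟩)
    have h2 := runPop_determined_le ends' C' hagree
    show F k ω' = F k (extFun ends' S (tauS ends' S ω'))
    rw [hFdef]
    simp only
    rw [h2.1]
  have hFmeas : ∀ k, Measurable (F k) := by
    intro k
    rw [hFrep k]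
    exact (measurable_from_finite_pi ends' _ _).comp (measurable_tauS ends' _)
  have hFmono : Monotone F := by
    intro k k' hk ω'
    have := ((runPop_prefix ends' C' hk (ω := ω')).sublist).count_le v
    exact Nat.cast_le.mpr this
  have hint : ∀ k, ∫⁻ ω, F k (Φ ω) ∂P = ∫⁻ ω', F k ω' ∂P' := by
    intro k
    set S := (Finset.univ ×ˢ Finset.range (k+1) : Finset (E' × ℕ))
    set G : (∀ p : S, EdgeOrient ends' (p : E' × ℕ).1) → ℝ≥0∞ :=
      fun h => F k (extFun ends' S h) with hGdef
    have hGmeas : Measurable G := measurable_from_finite_pi ends' S G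
    have hτm := measurable_tauS ends' S
    have hmap : (P.map Φ).map (tauS ends' S) = P'.map (tauS ends' S) :=
      map_tau_eq ends ends' ιV ιE hιV hιE hends P hP P' hP' S
    calc ∫⁻ ω, F k (Φ ω) ∂P = ∫⁻ ω, G (tauS ends' S (Φ ω)) ∂P := by
          apply lintegral_congr
          intro ω
          rw [hFrep k]
          rfl
    _ = ∫⁻ h, G h ∂(P.map (tauS ends' S ∘ Φ)) := by
          rw [lintegral_map hGmeas (hτm.comp hΦm)]
          rfl
    _ = ∫⁻ h, G h ∂((P.map Φ).map (tauS ends' S)) := by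
          rw [Measure.map_map hτm hΦm]
    _ = ∫⁻ h, G h ∂(P'.map (tauS ends' S)) := by rw [hmap]
    _ = ∫⁻ ω', G (tauS ends' S ω') ∂P' := lintegral_map hGmeas hτm
    _ = ∫⁻ ω', F k ω' ∂P' := by
          apply lintegral_congr
          intro ω'
          rw [hFrep k]
          rfl
  calc ∫⁻ ω, (popCount ends C ω (ιV v) : ℝ≥0∞) ∂P
      ≤ ∫⁻ ω, (popCount ends' C' (Φ ω) v : ℝ≥0∞) ∂P := lintegral_mono_ae hae
  _ = ∫⁻ ω, ⨆ k, F k (Φ ω) ∂P := by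
        apply lintegral_congr
        intro ω
        exact hFk (Φ ω)
  _ = ⨆ k, ∫⁻ ω, F k (Φ ω) ∂P := by
        rw [lintegral_iSup (f := fun k ω => F k (Φ ω)) (fun k => (hFmeas k).comp hΦm)
          (fun k k' hk ω => hFmono hk (Φ ω))]
  _ = ⨆ k, ∫⁻ ω', F k ω' ∂P' := by
        exact iSup_congr hint
  _ = ∫⁻ ω', ⨆ k, F k ω' ∂P' := by
        rw [lintegral_iSup hFmeas (fun k k' hk ω' => hFmono hk ω')]
  _ = ∫⁻ ω', (popCount ends' C' ω' v : ℝ≥0∞) ∂P' := by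
        apply lintegral_congr
        intro ω'
        exact (hFk ω').symm

end SinkPopping
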